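/- Let 𝒰 be an ultrafilter on ℕ such that for every b ∈ ℕ the set {n ∈ ℕ : n has at least b distinct prime divisors} belongs to 𝒰. Then the ultraproduct ring R = ∏_{n∈ℕ} ℤ/nℤ / 𝒰 witnesses TP2: there exist a ring-language formula φ(x; ȳ) with x a single variable, tuples (b_{i,j})_{i,j<ω} from R, and l ≥ 2 such that (i) for every i, no element of R satisfies φ(x, b_{i,j}) for l distinct values of j, and (ii) for every ξ : ω → ω and every finite F ⊆ ω there is a ∈ R with R ⊨ φ(a, b_{i,ξ(i)}) for all i ∈ F. -/

import Mathlib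

open FirstOrder Filter

/-- The congruence on the product ring identifying two sequences when they agree
on a set in the ultrafilter `𝒰`. -/
def ultraRingCon {I : Type*} (𝒰 : Ultrafilter I) (R : I → Type*) [∀ i, CommRing (R i)] :
    RingCon (∀ i, R i) where
  r f g := ∀ᶠ i in (𝒰 : Filter I), f i = g i
  iseqv :=
    ⟨fun _ => Eventually.of_forall fun _ => rfl,
     fun h => h.mono fun _ e => e.symm,
     fun h₁ h₂ => h₂.mp (h₁.mono fun _ e₁ e₂ => e₁.trans e₂)⟩
  mul' := fun h₁ h₂ => h₂.mp (h₁.mono fun i e₁ e₂ => by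
    simp only [Pi.mul_apply, e₁, e₂])
  add' := fun h₁ h₂ => h₂.mp (h₁.mono fun i e₁ e₂ => by
    simp only [Pi.add_apply, e₁, e₂])

/-- The ultraproduct `∏_{i ∈ I} R i / 𝒰` of the family of rings `R`
with respect to the ultrafilter `𝒰`. -/
def UltraProd {I : Type*} (𝒰 : Ultrafilter I) (R : I → Type*) [∀ i, CommRing (R i)] : Type _ :=
  (ultraRingCon 𝒰 R).Quotient

instance {I : Type*} (𝒰 : Ultrafilter I) (R : I → Type*) [∀ i, CommRing (R i)] :
    CommRing (UltraProd 𝒰 R) :=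
  inferInstanceAs (CommRing (ultraRingCon 𝒰 R).Quotient)

/-- The class of a sequence in the ultraproduct. -/
def UltraProd.mk {I : Type*} (𝒰 : Ultrafilter I) (R : I → Type*) [∀ i, CommRing (R i)]
    (f : ∀ i, R i) : UltraProd 𝒰 R :=
  (ultraRingCon 𝒰 R).mk' f

section AuxTP2

open Language

/-- The formula `∃ w, x = z + y * w`, i.e. `y ∣ x - z`, in the language of rings. -/
def phiTP2 : Language.ring.Formula (Unit ⊕ Fin 2) :=
  BoundedFormula.ex
    (Term.bdEqual (Term.var (Sum.inl (Sum.inl ())))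
      (Term.var (Sum.inl (Sum.inr 1)) +
        Term.var (Sum.inl (Sum.inr 0)) * Term.var (Sum.inr 0)))

lemma realize_phiTP2 {M : Type*} [CommRing M] (a m c : M) :
    (letI := FirstOrder.Ring.compatibleRingOfRing M
     phiTP2.Realize (Sum.elim (fun _ : Unit => a) ![m, c])) ↔ ∃ w : M, a = c + m * w := by
  letI := FirstOrder.Ring.compatibleRingOfRing M
  simp [phiTP2, Formula.Realize, BoundedFormula.realize_ex, Term.realize_var, Fin.snoc]

/-- Row `i`'s prime at component `n` : for `i` less than the number of distinct prime
factors of `n`, the `(i+1)`-th largest prime factor of `n`; otherwise a prime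
larger than `n` (so in particular not dividing `n` when `n ≥ 1`). -/
noncomputable def rowPrime (i n : ℕ) : ℕ :=
  if h : i < n.primeFactors.card then
    (n.primeFactors.sort (· ≤ ·)).get
      ⟨n.primeFactors.card - 1 - i, by rw [Finset.length_sort]; omega⟩
  else Nat.nth Nat.Prime (n + i + 1)

lemma rowPrime_mem {i n : ℕ} (h : i < n.primeFactors.card) :
    rowPrime i n ∈ n.primeFactors := by
  rw [rowPrime, dif_pos h]
  exact Finset.mem_sort _ |>.mp (List.get_mem _ _)

lemma rowPrime_prime (i n : ℕ) : (rowPrime i n).Prime := by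
  by_cases h : i < n.primeFactors.card
  · exact Nat.prime_of_mem_primeFactors (rowPrime_mem h)
  · rw [rowPrime, dif_neg h]; exact Nat.prime_nth_prime _

lemma rowPrime_dvd {i n : ℕ} (h : i < n.primeFactors.card) : rowPrime i n ∣ n :=
  Nat.dvd_of_mem_primeFactors (rowPrime_mem h)

lemma rowPrime_gt {i n : ℕ} (h : ¬ i < n.primeFactors.card) : n < rowPrime i n := by
  rw [rowPrime, dif_neg h]
  have := Nat.add_two_le_nth_prime (n + i + 1)
  omega

lemma rowPrime_ne {i i' n : ℕ} (h : i ≠ i') : rowPrime i n ≠ rowPrime i' n := by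
  by_cases hi : i < n.primeFactors.card <;> by_cases hi' : i' < n.primeFactors.card
  · simp only [rowPrime]
    rw [dif_pos hi, dif_pos hi']
    intro he
    have := ((n.primeFactors.sort_nodup (· ≤ ·)).get_inj_iff).mp he
    simp only [Fin.mk.injEq] at this
    omega
  · intro he
    have h1 : rowPrime i n ∣ n := rowPrime_dvd hi
    have h0 : n ≠ 0 := (Nat.mem_primeFactors.mp (rowPrime_mem hi)).2.2
    have := Nat.le_of_dvd (Nat.pos_of_ne_zero h0) h1
    have := rowPrime_gt hi'
    omega
  · intro he
    have h1 : rowPrime i' n ∣ n := rowPrime_dvd hi'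
    have h0 : n ≠ 0 := (Nat.mem_primeFactors.mp (rowPrime_mem hi')).2.2
    have := Nat.le_of_dvd (Nat.pos_of_ne_zero h0) h1
    have := rowPrime_gt hi
    omega
  · simp only [rowPrime]
    rw [dif_neg hi, dif_neg hi']
    intro he
    have := (Nat.nth_strictMono Nat.infinite_setOf_prime).injective he
    omega

lemma rowPrime_large {i d n : ℕ} (hn : n ≠ 0)
    (h : i + 1 + d ≤ n.primeFactors.card) : d < rowPrime i n := by
  have hi : i < n.primeFactors.card := by omega
  by_contra hle
  push_neg at hle
  set L := n.primeFactors.sort (· ≤ ·) with hL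
  have hlen : L.length = n.primeFactors.card := Finset.length_sort _
  have key : (Finset.range (n.primeFactors.card - i)).card ≤ (Finset.Icc 2 d).card := by
    apply Finset.card_le_card_of_injOn (fun k => L.getD k 0)
    · intro k hk
      rw [Finset.mem_coe, Finset.mem_range] at hk
      have hkl : k < L.length := by omega
      beta_reduce
      rw [List.getD_eq_getElem _ _ hkl]
      have hmem : L.get ⟨k, hkl⟩ ∈ n.primeFactors := Finset.mem_sort _ |>.mp (List.get_mem _ _)
      have hp := Nat.prime_of_mem_primeFactors hmem
      have hled : L.get ⟨k, hkl⟩ ≤ d := by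
        have : L.get ⟨k, hkl⟩ ≤ L.get ⟨n.primeFactors.card - 1 - i, by omega⟩ := by
          apply List.Pairwise.rel_get_of_le (Finset.pairwise_sort _ _)
          simp only [Fin.mk_le_mk]
          omega
        refine le_trans this ?_
        rw [rowPrime, dif_pos hi] at hle
        exact hle
      exact Finset.mem_Icc.mpr ⟨hp.two_le, hled⟩
    · intro k hk k' hk' he
      simp only [Finset.coe_range, Set.mem_Iio] at hk hk'
      have hkl : k < L.length := by omega
      have hkl' : k' < L.length := by omega
      dsimp only at he
      rw [List.getD_eq_getElem _ _ hkl, List.getD_eq_getElem _ _ hkl'] at he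
      have := ((n.primeFactors.sort_nodup (· ≤ ·)).get_inj_iff).mp he
      simpa using this
  rw [Finset.card_range, Nat.card_Icc] at key
  omega

/-- The modulus parameter of cell `(i, j)` at component `n`. -/
noncomputable def mSeqTP2 (i j n : ℕ) : ℕ :=
  rowPrime i n ^ (if i < n.primeFactors.card then 1 else j + 1)

/-- The residue parameter of cell `(i, j)` at component `n`. -/
noncomputable def cSeqTP2 (i j n : ℕ) : ℕ :=
  if i < n.primeFactors.card then j else rowPrime i n ^ j

lemma mSeqTP2_coprime {i i' n : ℕ} (h : i ≠ i') (j j' : ℕ) :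
    Nat.Coprime (mSeqTP2 i j n) (mSeqTP2 i' j' n) :=
  Nat.Coprime.pow _ _ ((Nat.coprime_primes (rowPrime_prime i n) (rowPrime_prime i' n)).mpr
    (rowPrime_ne h))

/-- Chinese remainder theorem for finitely many pairwise coprime moduli. -/
lemma crtTP2 (F : Finset ℕ) (m c : ℕ → ℕ)
    (hco : ∀ i ∈ F, ∀ i' ∈ F, i ≠ i' → Nat.Coprime (m i) (m i')) :
    ∃ A : ℕ, ∀ i ∈ F, A ≡ c i [MOD m i] := by
  classical
  induction F using Finset.induction with
  | empty => exact ⟨0, by simp⟩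
  | @insert a s ha ih =>
    obtain ⟨A, hA⟩ := ih fun i hi i' hi' hne =>
      hco i (Finset.mem_insert_of_mem hi) i' (Finset.mem_insert_of_mem hi') hne
    have hcop : Nat.Coprime (m a) (∏ i ∈ s, m i) :=
      Nat.Coprime.prod_right fun i hi =>
        hco a (Finset.mem_insert_self a s) i (Finset.mem_insert_of_mem hi)
          (fun he => ha (he ▸ hi))
    obtain ⟨k, hk1, hk2⟩ := Nat.chineseRemainder hcop (c a) A
    refine ⟨k, fun i hi => ?_⟩
    rcases Finset.mem_insert.mp hi with rfl | hi
    · exact hk1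
    · exact (Nat.ModEq.of_dvd (Finset.dvd_prod_of_mem m hi) hk2).trans (hA i hi)

/-- The componentwise contradiction used for row-inconsistency. -/
lemma component_contraTP2 {i j j' n : ℕ} (hjj : j < j')
    (hK : ∃ s : Finset ℕ, i + 1 + (j' - j) ≤ s.card ∧ ∀ p ∈ s, Nat.Prime p ∧ p ∣ n)
    (a w w' : ZMod n)
    (h1 : a = (cSeqTP2 i j n : ZMod n) + (mSeqTP2 i j n : ZMod n) * w)
    (h2 : a = (cSeqTP2 i j' n : ZMod n) + (mSeqTP2 i j' n : ZMod n) * w') : False := by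
  obtain ⟨s, hsc, hsp⟩ := hK
  set P := rowPrime i n with hP
  have hp : P.Prime := rowPrime_prime i n
  by_cases hbr : i < n.primeFactors.card
  · -- branch A : the parameters are `(P, j)` with `P` a large prime dividing `n`.
    have hn : n ≠ 0 := by
      intro h0
      rw [h0] at hbr
      simp at hbr
    have hsub : s ⊆ n.primeFactors := fun p hp' =>
      Nat.mem_primeFactors.mpr ⟨(hsp p hp').1, (hsp p hp').2, hn⟩
    have hcard : i + 1 + (j' - j) ≤ n.primeFactors.card :=
      le_trans hsc (Finset.card_le_card hsub)
    have hlarge : j' - j < P := rowPrime_large hn hcard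
    have hdvd : P ∣ n := rowPrime_dvd hbr
    simp only [mSeqTP2, cSeqTP2, if_pos hbr, pow_one] at h1 h2
    let f := ZMod.castHom hdvd (ZMod P)
    have e1 := congrArg f h1
    have e2 := congrArg f h2
    rw [map_add, map_mul, map_natCast, map_natCast] at e1 e2
    rw [ZMod.natCast_self] at e1 e2
    rw [zero_mul, add_zero] at e1 e2
    have : (j : ZMod P) = (j' : ZMod P) := e1.symm.trans e2
    have hmod : j ≡ j' [MOD P] := (ZMod.natCast_eq_natCast_iff _ _ _).mp this
    have : P ∣ j' - j := (Nat.modEq_iff_dvd' hjj.le).mp hmod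
    have := Nat.le_of_dvd (by omega) this
    omega
  · -- branch B : necessarily `n = 0`, and the parameters are `(P^(j+1), P^j)`.
    have hn : n = 0 := by
      by_contra h0
      have hsub : s ⊆ n.primeFactors := fun p hp' =>
        Nat.mem_primeFactors.mpr ⟨(hsp p hp').1, (hsp p hp').2, h0⟩
      have := Finset.card_le_card hsub
      omega
    subst hn
    simp only [mSeqTP2, cSeqTP2, if_neg hbr] at h1 h2
    let f := ZMod.castHom (dvd_zero (P ^ (j + 1))) (ZMod (P ^ (j + 1)))
    have e1 := congrArg f h1
    have e2 := congrArg f h2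
    rw [map_add, map_mul, map_natCast, map_natCast] at e1 e2
    have hz1 : ((P ^ (j + 1) : ℕ) : ZMod (P ^ (j + 1))) = 0 := ZMod.natCast_self _
    have hz2 : ((P ^ (j' + 1) : ℕ) : ZMod (P ^ (j + 1))) = 0 :=
      (ZMod.natCast_eq_zero_iff _ _).mpr (pow_dvd_pow P (by omega))
    have hz3 : ((P ^ j' : ℕ) : ZMod (P ^ (j + 1))) = 0 :=
      (ZMod.natCast_eq_zero_iff _ _).mpr (pow_dvd_pow P (by omega))
    rw [hz1, zero_mul, add_zero] at e1
    rw [hz2, hz3, zero_mul, add_zero] at e2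
    have : ((P ^ j : ℕ) : ZMod (P ^ (j + 1))) = 0 := e1.symm.trans e2
    have hdvd : P ^ (j + 1) ∣ P ^ j := (ZMod.natCast_eq_zero_iff _ _).mp this
    have := (Nat.pow_dvd_pow_iff_le_right hp.one_lt).mp hdvd
    omega

section UltraProdLemmas

variable {I : Type*} (𝒰 : Ultrafilter I) (R : I → Type*) [∀ i, CommRing (R i)]

lemma UltraProd.mk_eq_mk {f g : ∀ i, R i} :
    UltraProd.mk 𝒰 R f = UltraProd.mk 𝒰 R g ↔ ∀ᶠ i in (𝒰 : Filter I), f i = g i :=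
  RingCon.eq _

lemma UltraProd.mk_surjective (a : UltraProd 𝒰 R) : ∃ f, UltraProd.mk 𝒰 R f = a :=
  Quot.exists_rep a

lemma UltraProd.mk_add (f g : ∀ i, R i) :
    UltraProd.mk 𝒰 R f + UltraProd.mk 𝒰 R g = UltraProd.mk 𝒰 R (fun i => f i + g i) :=
  (map_add ((ultraRingCon 𝒰 R).mk') f g).symm

lemma UltraProd.mk_mul (f g : ∀ i, R i) :
    UltraProd.mk 𝒰 R f * UltraProd.mk 𝒰 R g = UltraProd.mk 𝒰 R (fun i => f i * g i) :=
  (map_mul ((ultraRingCon 𝒰 R).mk') f g).symm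

end UltraProdLemmas

end AuxTP2

/-- A ring `M`, regarded as a structure in the first-order language of rings, witnesses TP2
if there are a formula `φ(x; ȳ)` with `x` a single variable, an array of parameter tuples
`(b i j)_{i,j < ω}` from `M`, and `l ≥ 2` such that: (i) for every `i`, no element of `M`
satisfies `φ(x, b i j)` for `l` distinct values of `j`; and (ii) for every `ξ : ω → ω` and
every finite `F ⊆ ω` there is `a ∈ M` with `M ⊨ φ(a, b i (ξ i))` for all `i ∈ F`. -/
def WitnessesTP2 (M : Type*) [Ring M] : Prop :=
  letI := FirstOrder.Ring.compatibleRingOfRing M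
  ∃ (m : ℕ) (φ : Language.ring.Formula (Unit ⊕ Fin m))
    (b : ℕ → ℕ → Fin m → M) (l : ℕ),
    2 ≤ l ∧
    (∀ i : ℕ, ¬∃ (a : M) (s : Finset ℕ), s.card = l ∧
      ∀ j ∈ s, φ.Realize (Sum.elim (fun _ : Unit => a) (b i j))) ∧
    (∀ (ξ : ℕ → ℕ) (F : Finset ℕ), ∃ a : M,
      ∀ i ∈ F, φ.Realize (Sum.elim (fun _ : Unit => a) (b i (ξ i))))

/-- Let `𝒰` be an ultrafilter on `ℕ` such that for every `b ∈ ℕ` the set of `n` having at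
least `b` distinct prime divisors belongs to `𝒰`.  Then the ultraproduct ring
`∏_{n ∈ ℕ} ℤ/nℤ / 𝒰` witnesses TP2. -/
theorem tp2_ultraproduct_of_unboundedly_many_primes (𝒰 : Ultrafilter ℕ)
    (hU : ∀ b : ℕ,
      {n : ℕ | ∃ s : Finset ℕ, b ≤ s.card ∧ ∀ p ∈ s, Nat.Prime p ∧ p ∣ n} ∈ 𝒰) :
    WitnessesTP2 (UltraProd 𝒰 fun n => ZMod n) := by
  classical
  unfold WitnessesTP2
  refine ⟨2, phiTP2, fun i j =>
    ![UltraProd.mk 𝒰 _ (fun n => (mSeqTP2 i j n : ZMod n)),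
      UltraProd.mk 𝒰 _ (fun n => (cSeqTP2 i j n : ZMod n))], 2, le_rfl, ?_, ?_⟩
  · rintro i ⟨a, s, hcard, hs⟩
    have key : ∀ j ∈ s, ∀ j' ∈ s, j < j' → False := by
      intro j hj j' hj' hlt
      obtain ⟨w, hw⟩ := (realize_phiTP2 _ _ _).mp (hs j hj)
      obtain ⟨w', hw'⟩ := (realize_phiTP2 _ _ _).mp (hs j' hj')
      obtain ⟨A, rfl⟩ := UltraProd.mk_surjective 𝒰 _ a
      obtain ⟨W, rfl⟩ := UltraProd.mk_surjective 𝒰 _ w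
      obtain ⟨W', rfl⟩ := UltraProd.mk_surjective 𝒰 _ w'
      rw [UltraProd.mk_mul, UltraProd.mk_add, UltraProd.mk_eq_mk] at hw hw'
      have hKev : ∀ᶠ n in (𝒰 : Filter ℕ), ∃ t : Finset ℕ,
          i + 1 + (j' - j) ≤ t.card ∧ ∀ p ∈ t, Nat.Prime p ∧ p ∣ n := hU _
      obtain ⟨n, ⟨hn1, hn2⟩, hn3⟩ := ((hw.and hw').and hKev).exists
      exact component_contraTP2 hlt hn3 (A n) (W n) (W' n) hn1 hn2
    obtain ⟨j, hj, j', hj', hne⟩ := Finset.one_lt_card.mp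
      (by omega : 1 < s.card)
    rcases hne.lt_or_gt with h | h
    · exact key j hj j' hj' h
    · exact key j' hj' j hj h
  · intro ξ F
    have hA : ∀ n, ∃ A : ℕ, ∀ i ∈ F, A ≡ cSeqTP2 i (ξ i) n [MOD mSeqTP2 i (ξ i) n] :=
      fun n => crtTP2 F _ _ fun i _ i' _ hne => mSeqTP2_coprime hne _ _
    choose A hA using hA
    refine ⟨UltraProd.mk 𝒰 _ (fun n => (A n : ZMod n)), fun i hi => ?_⟩
    refine (realize_phiTP2 _ _ _).mpr ?_
    have hdvd : ∀ n, ∃ u : ℤ,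
        ((cSeqTP2 i (ξ i) n : ℤ) - (A n : ℤ)) = (mSeqTP2 i (ξ i) n : ℤ) * u :=
      fun n => (hA n i hi).dvd
    choose u hu using hdvd
    refine ⟨UltraProd.mk 𝒰 _ (fun n => ((-(u n) : ℤ) : ZMod n)), ?_⟩
    rw [UltraProd.mk_mul, UltraProd.mk_add, UltraProd.mk_eq_mk]
    refine Filter.Eventually.of_forall fun n => ?_
    have hc := congrArg (fun z : ℤ => (z : ZMod n)) (hu n)
    push_cast at hc ⊢
    linear_combination -hc
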